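/- Let R be an associative ring and let I be a one-sided (left or right) ideal of R that is commutative as a ring. Then there exists a two-sided ideal T of R with T² = 0 such that the image of I in R/T lies in the center of R/T; consequently I + T is a two-sided ideal of R containing I that is Lie solvable of derived length at most 2. -/

import Mathlib

/-- `I` is a right ideal of `R` (as an additive subgroup closed under right multiplication). -/
def IsRightIdealSG {R : Type*} [Ring R] (I : AddSubgroup R) : Prop :=
  ∀ i ∈ I, ∀ r : R, i * r ∈ I

/-- `I` is a left ideal of `R`. -/
def IsLeftIdealSG {R : Type*} [Ring R] (I : AddSubgroup R) : Prop :=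
  ∀ i ∈ I, ∀ r : R, r * i ∈ I

/-- `I` is a two-sided ideal of `R`. -/
def IsIdealSG {R : Type*} [Ring R] (I : AddSubgroup R) : Prop :=
  IsLeftIdealSG I ∧ IsRightIdealSG I

/-- Left-normed iterated commutator: `itComm s n = [[...[s 0, s 1],...], s n]`
(a left-normed commutator of `n + 1` elements). -/
def itComm {R : Type*} [Ring R] (s : ℕ → R) : ℕ → R
  | 0 => s 0
  | n + 1 => itComm s n * s (n + 1) - s (n + 1) * itComm s n

/-- `S` is Lie nilpotent of class ≤ m : every left-normed commutator of `m + 1`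
elements of `S` vanishes. -/
def LieNilpotentClassLe {R : Type*} [Ring R] (S : Set R) (m : ℕ) : Prop :=
  ∀ s : ℕ → R, (∀ n, s n ∈ S) → itComm s m = 0

/-- The Lie derived series of an additive subgroup `S` of a ring:
`D 0 = S`, `D (k+1)` = additive span of `[D k, D k]`. -/
def derSeries {R : Type*} [Ring R] (S : AddSubgroup R) : ℕ → AddSubgroup R
  | 0 => S
  | n + 1 => AddSubgroup.closure
      {x | ∃ a ∈ derSeries S n, ∃ b ∈ derSeries S n, x = a * b - b * a}

/-- `R^(−)_n`: the additive subgroup generated by all left-normed commutators of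
`n` elements of `R`. -/
def lcs (R : Type*) [Ring R] (n : ℕ) : AddSubgroup R :=
  AddSubgroup.closure {x | ∃ s : ℕ → R, x = itComm s (n - 1)}

/-- `R_n = R^(−)_n + R^(−)_n · R`, a two-sided ideal of `R`. -/
def Rn (R : Type*) [Ring R] (n : ℕ) : AddSubgroup R :=
  lcs R n ⊔ AddSubgroup.closure {x | ∃ c ∈ lcs R n, ∃ r : R, x = c * r}

/-- The additive span of `k`-fold products of elements of `S`. -/
def spanPow {R : Type*} [Ring R] (S : Set R) (k : ℕ) : AddSubgroup R :=
  AddSubgroup.closure {x | ∃ l : List R, l.length = k ∧ (∀ a ∈ l, a ∈ S) ∧ x = l.prod}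

/-- `J` is nilpotent: all `k`-fold products of its elements vanish for some `k > 0`. -/
def IsNilpotentSG {R : Type*} [Ring R] (J : AddSubgroup R) : Prop :=
  ∃ k : ℕ, 0 < k ∧ ∀ l : List R, l.length = k → (∀ a ∈ l, a ∈ J) → l.prod = 0

/-- `R` is semiprime: it has no nonzero nilpotent two-sided ideals. -/
def IsSemiprimeRing (R : Type*) [Ring R] : Prop :=
  ∀ J : AddSubgroup R, IsIdealSG J → IsNilpotentSG J → J = ⊥
section Aux

variable {R : Type*} [Ring R]

private lemma derSeries_two_eq_bot (S T : AddSubgroup R)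
    (hT2 : ∀ a ∈ T, ∀ b ∈ T, a * b = 0)
    (hsub : ∀ a ∈ S, ∀ b ∈ S, a * b - b * a ∈ T) : derSeries S 2 = ⊥ := by
  have h1 : derSeries S 1 ≤ T := by
    show AddSubgroup.closure _ ≤ T
    rw [AddSubgroup.closure_le]
    rintro x ⟨a, ha, b, hb, rfl⟩
    exact hsub a ha b hb
  have h2 : derSeries S 2 ≤ ⊥ := by
    show AddSubgroup.closure _ ≤ ⊥
    rw [AddSubgroup.closure_le]
    rintro x ⟨a, ha, b, hb, rfl⟩
    have : a * b - b * a = 0 := by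
      rw [hT2 a (h1 ha) b (h1 hb), hT2 b (h1 hb) a (h1 ha), sub_zero]
    simp [this]
  exact le_bot_iff.mp h2

/-- Right-ideal case: T = R·[I,R] (additive span). -/
private def Tright (I : AddSubgroup R) : AddSubgroup R :=
  AddSubgroup.closure {x : R | ∃ i ∈ I, ∃ r s : R, x = s * (i * r - r * i)}

private lemma key_right (I : AddSubgroup R) (hI : ∀ i ∈ I, ∀ r : R, i * r ∈ I)
    (hcomm : ∀ a ∈ I, ∀ b ∈ I, a * b = b * a) :
    ∀ j ∈ I, ∀ i ∈ I, ∀ r : R, j * (i * r - r * i) = 0 := by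
  intro j hj i hi r
  have h2 : (j * r) * i = i * (j * r) := hcomm _ (hI j hj r) i hi
  have h3 : i * j = j * i := hcomm i hi j hj
  have : j * (r * i) = j * (i * r) := by
    rw [← mul_assoc, h2, ← mul_assoc, h3, mul_assoc]
  rw [mul_sub, this, sub_self]

private lemma Tright_left (I : AddSubgroup R) :
    ∀ a ∈ Tright I, ∀ t : R, t * a ∈ Tright I := by
  intro a ha
  induction ha using AddSubgroup.closure_induction with
  | mem x hx =>
    obtain ⟨i, hi, r, s, rfl⟩ := hx
    intro t
    rw [← mul_assoc]
    exact AddSubgroup.subset_closure ⟨i, hi, r, t * s, rfl⟩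
  | zero => intro t; simpa using (Tright I).zero_mem
  | add x y _ _ hx hy => intro t; rw [mul_add]; exact add_mem (hx t) (hy t)
  | neg x _ hx => intro t; rw [mul_neg]; exact neg_mem (hx t)

private lemma Tright_killed (I : AddSubgroup R) (hI : ∀ i ∈ I, ∀ r : R, i * r ∈ I)
    (hcomm : ∀ a ∈ I, ∀ b ∈ I, a * b = b * a) :
    ∀ a ∈ Tright I, ∀ j ∈ I, j * a = 0 := by
  intro a ha
  induction ha using AddSubgroup.closure_induction with
  | mem x hx =>
    obtain ⟨i, hi, r, s, rfl⟩ := hx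
    intro j hj
    rw [← mul_assoc]
    exact key_right I hI hcomm (j * s) (hI j hj s) i hi r
  | zero => intro j _; simp
  | add x y _ _ hx hy => intro j hj; rw [mul_add, hx j hj, hy j hj, add_zero]
  | neg x _ hx => intro j hj; rw [mul_neg, hx j hj, neg_zero]

private lemma Tright_right (I : AddSubgroup R) :
    ∀ a ∈ Tright I, ∀ t : R, a * t ∈ Tright I := by
  intro a ha
  induction ha using AddSubgroup.closure_induction with
  | mem x hx =>
    obtain ⟨i, hi, r, s, rfl⟩ := hx
    intro t
    have e : s * (i * r - r * i) * t
        = s * (i * (r * t) - (r * t) * i) - (s * r) * (i * t - t * i) := by noncomm_ring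
    rw [e]
    exact sub_mem (AddSubgroup.subset_closure ⟨i, hi, r * t, s, rfl⟩)
      (AddSubgroup.subset_closure ⟨i, hi, t, s * r, rfl⟩)
  | zero => intro t; simpa using (Tright I).zero_mem
  | add x y _ _ hx hy => intro t; rw [add_mul]; exact add_mem (hx t) (hy t)
  | neg x _ hx => intro t; rw [neg_mul]; exact neg_mem (hx t)

private lemma Tright_sq (I : AddSubgroup R) (hI : ∀ i ∈ I, ∀ r : R, i * r ∈ I)
    (hcomm : ∀ a ∈ I, ∀ b ∈ I, a * b = b * a) :
    ∀ a ∈ Tright I, ∀ b ∈ Tright I, a * b = 0 := by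
  intro a ha
  induction ha using AddSubgroup.closure_induction with
  | mem x hx =>
    obtain ⟨i, hi, r, s, rfl⟩ := hx
    intro b hb
    have h1 : i * (r * b) = 0 :=
      Tright_killed I hI hcomm (r * b) (Tright_left I b hb r) i hi
    have h2 : i * b = 0 := Tright_killed I hI hcomm b hb i hi
    calc s * (i * r - r * i) * b
        = s * (i * (r * b)) - s * (r * (i * b)) := by noncomm_ring
      _ = 0 := by rw [h1, h2, mul_zero, mul_zero, mul_zero, sub_zero]
  | zero => intro b _; simp
  | add x y _ _ hx hy => intro b hb; rw [add_mul, hx b hb, hy b hb, add_zero]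
  | neg x _ hx => intro b hb; rw [neg_mul, hx b hb, neg_zero]

/-- Left-ideal case: T = [I,R]·R. -/
private def Tleft (I : AddSubgroup R) : AddSubgroup R :=
  AddSubgroup.closure {x : R | ∃ i ∈ I, ∃ r s : R, x = (i * r - r * i) * s}

private lemma key_left (I : AddSubgroup R) (hI : ∀ i ∈ I, ∀ r : R, r * i ∈ I)
    (hcomm : ∀ a ∈ I, ∀ b ∈ I, a * b = b * a) :
    ∀ j ∈ I, ∀ i ∈ I, ∀ r : R, (i * r - r * i) * j = 0 := by
  intro j hj i hi r
  have h2 : i * (r * j) = (r * j) * i := hcomm i hi _ (hI j hj r)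
  have h3 : j * i = i * j := hcomm j hj i hi
  have : (i * r) * j = (r * i) * j := by
    rw [mul_assoc, h2, mul_assoc, h3, ← mul_assoc]
  rw [sub_mul, this, sub_self]

private lemma Tleft_right (I : AddSubgroup R) :
    ∀ a ∈ Tleft I, ∀ t : R, a * t ∈ Tleft I := by
  intro a ha
  induction ha using AddSubgroup.closure_induction with
  | mem x hx =>
    obtain ⟨i, hi, r, s, rfl⟩ := hx
    intro t
    rw [mul_assoc]
    exact AddSubgroup.subset_closure ⟨i, hi, r, s * t, rfl⟩
  | zero => intro t; simpa using (Tleft I).zero_mem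
  | add x y _ _ hx hy => intro t; rw [add_mul]; exact add_mem (hx t) (hy t)
  | neg x _ hx => intro t; rw [neg_mul]; exact neg_mem (hx t)

private lemma Tleft_killed (I : AddSubgroup R) (hI : ∀ i ∈ I, ∀ r : R, r * i ∈ I)
    (hcomm : ∀ a ∈ I, ∀ b ∈ I, a * b = b * a) :
    ∀ a ∈ Tleft I, ∀ j ∈ I, a * j = 0 := by
  intro a ha
  induction ha using AddSubgroup.closure_induction with
  | mem x hx =>
    obtain ⟨i, hi, r, s, rfl⟩ := hx
    intro j hj
    rw [mul_assoc]
    exact key_left I hI hcomm (s * j) (hI j hj s) i hi r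
  | zero => intro j _; simp
  | add x y _ _ hx hy => intro j hj; rw [add_mul, hx j hj, hy j hj, add_zero]
  | neg x _ hx => intro j hj; rw [neg_mul, hx j hj, neg_zero]

private lemma Tleft_left (I : AddSubgroup R) :
    ∀ a ∈ Tleft I, ∀ t : R, t * a ∈ Tleft I := by
  intro a ha
  induction ha using AddSubgroup.closure_induction with
  | mem x hx =>
    obtain ⟨i, hi, r, s, rfl⟩ := hx
    intro t
    have e : t * ((i * r - r * i) * s)
        = (i * (t * r) - (t * r) * i) * s - (i * t - t * i) * (r * s) := by noncomm_ring
    rw [e]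
    exact sub_mem (AddSubgroup.subset_closure ⟨i, hi, t * r, s, rfl⟩)
      (AddSubgroup.subset_closure ⟨i, hi, t, r * s, rfl⟩)
  | zero => intro t; simpa using (Tleft I).zero_mem
  | add x y _ _ hx hy => intro t; rw [mul_add]; exact add_mem (hx t) (hy t)
  | neg x _ hx => intro t; rw [mul_neg]; exact neg_mem (hx t)

private lemma Tleft_sq (I : AddSubgroup R) (hI : ∀ i ∈ I, ∀ r : R, r * i ∈ I)
    (hcomm : ∀ a ∈ I, ∀ b ∈ I, a * b = b * a) :
    ∀ a ∈ Tleft I, ∀ b ∈ Tleft I, a * b = 0 := by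
  intro a ha b hb
  induction hb using AddSubgroup.closure_induction with
  | mem x hx =>
    obtain ⟨i, hi, r, s, rfl⟩ := hx
    have h1 : (a * r) * i = 0 :=
      Tleft_killed I hI hcomm (a * r) (Tleft_right I a ha r) i hi
    have h2 : a * i = 0 := Tleft_killed I hI hcomm a ha i hi
    calc a * ((i * r - r * i) * s)
        = ((a * i) * r) * s - ((a * r) * i) * s := by noncomm_ring
      _ = 0 := by rw [h1, h2]; simp
  | zero => simp
  | add x y _ _ hx hy => rw [mul_add, hx, hy, add_zero]
  | neg x _ hx => rw [mul_neg, hx, neg_zero]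

end Aux

/-- A commutative one-sided ideal `I` of `R` admits a two-sided ideal `T`
with `T² = 0` whose quotient sends `I` into the center, and `I + T` is a two-sided ideal
of `R` containing `I` which is Lie solvable of derived length at most `2`. -/
theorem commutative_ideal_in_lie_solvable_ideal {R : Type*} [Ring R] (I : AddSubgroup R)
    (hI : IsLeftIdealSG I ∨ IsRightIdealSG I)
    (hcomm : ∀ a ∈ I, ∀ b ∈ I, a * b = b * a) :
    ∃ T : AddSubgroup R, IsIdealSG T ∧ (∀ a ∈ T, ∀ b ∈ T, a * b = 0) ∧
      (∀ i ∈ I, ∀ r : R, i * r - r * i ∈ T) ∧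
      IsIdealSG (I ⊔ T) ∧ derSeries (I ⊔ T) 2 = ⊥ := by
  rcases hI with hL | hR
  · refine ⟨Tleft I, ⟨Tleft_left I, Tleft_right I⟩, Tleft_sq I hL hcomm, ?_, ⟨?_, ?_⟩, ?_⟩
    · intro i hi r
      exact AddSubgroup.subset_closure ⟨i, hi, r, 1, (mul_one _).symm⟩
    · intro x hx r
      obtain ⟨y, hy, z, hz, rfl⟩ := AddSubgroup.mem_sup.mp hx
      rw [mul_add]
      exact AddSubgroup.mem_sup.mpr ⟨r * y, hL y hy r, r * z, Tleft_left I z hz r, rfl⟩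
    · intro x hx r
      obtain ⟨y, hy, z, hz, rfl⟩ := AddSubgroup.mem_sup.mp hx
      refine AddSubgroup.mem_sup.mpr ⟨r * y, hL y hy r,
        (y * r - r * y) + z * r, add_mem (AddSubgroup.subset_closure ⟨y, hy, r, 1, (mul_one _).symm⟩)
          (Tleft_right I z hz r), by noncomm_ring⟩
    · refine derSeries_two_eq_bot _ (Tleft I) (Tleft_sq I hL hcomm) ?_
      intro a ha b hb
      obtain ⟨i, hi, t, ht, rfl⟩ := AddSubgroup.mem_sup.mp ha
      obtain ⟨j, hj, u, hu, rfl⟩ := AddSubgroup.mem_sup.mp hb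
      have e : (i + t) * (j + u) - (j + u) * (i + t)
          = (i * j - j * i) + ((i * u - u * i) + (t * j - j * t) + (t * u - u * t)) := by
        noncomm_ring
      rw [e, hcomm i hi j hj, sub_self, zero_add]
      exact add_mem (add_mem
        (sub_mem (Tleft_left I u hu i) (Tleft_right I u hu i))
        (sub_mem (Tleft_right I t ht j) (Tleft_left I t ht j)))
        (sub_mem (Tleft_right I t ht u) (Tleft_left I t ht u))
  · refine ⟨Tright I, ⟨Tright_left I, Tright_right I⟩, Tright_sq I hR hcomm, ?_, ⟨?_, ?_⟩, ?_⟩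
    · intro i hi r
      exact AddSubgroup.subset_closure ⟨i, hi, r, 1, (one_mul _).symm⟩
    · intro x hx r
      obtain ⟨y, hy, z, hz, rfl⟩ := AddSubgroup.mem_sup.mp hx
      refine AddSubgroup.mem_sup.mpr ⟨y * r, hR y hy r,
        -(y * r - r * y) + r * z, add_mem (neg_mem (AddSubgroup.subset_closure
          ⟨y, hy, r, 1, (one_mul _).symm⟩)) (Tright_left I z hz r), by noncomm_ring⟩
    · intro x hx r
      obtain ⟨y, hy, z, hz, rfl⟩ := AddSubgroup.mem_sup.mp hx
      rw [add_mul]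
      exact AddSubgroup.mem_sup.mpr ⟨y * r, hR y hy r, z * r, Tright_right I z hz r, rfl⟩
    · refine derSeries_two_eq_bot _ (Tright I) (Tright_sq I hR hcomm) ?_
      intro a ha b hb
      obtain ⟨i, hi, t, ht, rfl⟩ := AddSubgroup.mem_sup.mp ha
      obtain ⟨j, hj, u, hu, rfl⟩ := AddSubgroup.mem_sup.mp hb
      have e : (i + t) * (j + u) - (j + u) * (i + t)
          = (i * j - j * i) + ((i * u - u * i) + (t * j - j * t) + (t * u - u * t)) := by
        noncomm_ring
      rw [e, hcomm i hi j hj, sub_self, zero_add]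
      exact add_mem (add_mem
        (sub_mem (Tright_left I u hu i) (Tright_right I u hu i))
        (sub_mem (Tright_right I t ht j) (Tright_left I t ht j)))
        (sub_mem (Tright_right I t ht u) (Tright_left I t ht u))
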